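/- arXiv:1206.2941 — 2 statements merged into one kernel-verified Lean document; each statement's English description precedes it below -/
import Mathlib

section
/- Let f : G → H be a morphism of ∞-groupoids of type C. The following are equivalent: (3) Π_1(f) : Π_1(G) → Π_1(H) is an equivalence of groupoids and for every n ≥ 2 and every pair of parallel (n−1)-arrows u, v of G the induced map π_n(G, u, v) → π_n(H, f(u), f(v)) is a bijection; (4) Π_1(f) is full and essentially surjective, and for every n ≥ 2 and every pair of parallel (n−1)-arrows u, v of G the induced map π_n(G, u, v) → π_n(H, f(u), f(v)) is a surjection. -/
/-!
STATEMENT 11: Let `f : G → H` be a morphism of ∞-groupoids of type `C`.  The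
following are equivalent:
(3) `Π₁(f) : Π₁(G) → Π₁(H)` is an equivalence of groupoids (full, faithful and
essentially surjective) and for every `n ≥ 2` and every pair of parallel
`(n-1)`-arrows `u, v` of `G` the induced map `π_n(G, u, v) → π_n(H, f(u), f(v))`
is a bijection;
(4) `Π₁(f)` is full and essentially surjective, and for every `n ≥ 2` and every
pair of parallel `(n-1)`-arrows `u, v` the induced map is a surjection.
All conditions on quotients are expressed at the level of representatives.
-/

open CategoryTheory Opposite

open CategoryTheory Opposite

universe w v u

/-- A coglobular object: a category under the globe category 𝔾. -/
structure Coglob (E : Type u) [Category.{v} E] where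
  D : ℕ → E
  σ : ∀ n, D n ⟶ D (n + 1)
  τ : ∀ n, D n ⟶ D (n + 1)
  relσ : ∀ n, σ n ≫ σ (n + 1) = σ n ≫ τ (n + 1)
  relτ : ∀ n, τ n ≫ σ (n + 1) = τ n ≫ τ (n + 1)

namespace Coglob

variable {E : Type u} [Category.{v} E] (Φ : Coglob E)

/-- Iterated cosource `σ^{j+k}_j : D j ⟶ D (j+k)`. -/
def σUp (j : ℕ) : ∀ k : ℕ, Φ.D j ⟶ Φ.D (j + k)
  | 0 => 𝟙 _
  | k + 1 => σUp j k ≫ Φ.σ (j + k)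

/-- Iterated cotarget `τ^{j+k}_j : D j ⟶ D (j+k)`. -/
def τUp (j : ℕ) : ∀ k : ℕ, Φ.D j ⟶ Φ.D (j + k)
  | 0 => 𝟙 _
  | k + 1 => τUp j k ≫ Φ.τ (j + k)

lemma τUp_σ (j k : ℕ) :
    Φ.τUp j (k + 1) ≫ Φ.σ (j + k + 1) = Φ.τUp j (k + 2) := by
  show (Φ.τUp j k ≫ Φ.τ (j + k)) ≫ Φ.σ (j + k + 1) =
    (Φ.τUp j k ≫ Φ.τ (j + k)) ≫ Φ.τ (j + k + 1)
  rw [Category.assoc, Category.assoc, Φ.relτ]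

lemma σUp_τ (j k : ℕ) :
    Φ.σUp j (k + 1) ≫ Φ.τ (j + k + 1) = Φ.σUp j (k + 2) := by
  show (Φ.σUp j k ≫ Φ.σ (j + k)) ≫ Φ.τ (j + k + 1) =
    (Φ.σUp j k ≫ Φ.σ (j + k)) ≫ Φ.σ (j + k + 1)
  rw [Category.assoc, Category.assoc, Φ.relσ]

/-- Iterated cosource `D 0 ⟶ D n`. -/
def σZero : ∀ n : ℕ, Φ.D 0 ⟶ Φ.D n
  | 0 => 𝟙 _
  | n + 1 => σZero n ≫ Φ.σ n

/-- Globular parallelism of two morphisms with source a globe `D n`. -/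
def Par : ∀ {n : ℕ} {Y : E}, (Φ.D n ⟶ Y) → (Φ.D n ⟶ Y) → Prop
  | 0, _, _, _ => True
  | m + 1, _, f, g => (Φ.σ m ≫ f = Φ.σ m ≫ g) ∧ (Φ.τ m ≫ f = Φ.τ m ≫ g)

end Coglob

/-- Tables of dimensions, indexed by the dimension of the first globe: the table
`cons j d e T` glues a disk of dimension `j + d + 1` along the dimension `j` onto a
table whose first dimension is `j + e + 1` (so that both dimensions exceed the
gluing dimension, as required for a table of dimensions). -/
inductive GTable : ℕ → Type where
  | single (i : ℕ) : GTable i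
  | cons (j d e : ℕ) (T : GTable (j + e + 1)) : GTable (j + d + 1)

/-- Dimension of a table: the greatest dimension appearing in it. -/
def GTable.dim : ∀ {i : ℕ}, GTable i → ℕ
  | _, .single i => i
  | _, .cons j d _ T => max (j + d + 1) T.dim

/-- Chosen globular sums on a category under 𝔾: for every table of dimensions, an
iterated amalgamated sum of globes, glued along iterated cosources and cotargets,
with its universal property. This is the structure of a globular extension. -/
structure GSums {E : Type u} [Category.{v} E] (Φ : Coglob E) where
  S : ∀ {i : ℕ}, GTable i → E
  single_eq : ∀ i, S (.single i) = Φ.D i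
  ι : ∀ {i : ℕ} (T : GTable i), Φ.D i ⟶ S T
  ι_single : ∀ i, ι (.single i) = eqToHom (single_eq i).symm
  ρ : ∀ {j d e : ℕ} (T : GTable (j + e + 1)), S T ⟶ S (.cons j d e T)
  glue : ∀ {j d e : ℕ} (T : GTable (j + e + 1)),
    Φ.σUp j (d + 1) ≫ ι (.cons j d e T) = Φ.τUp j (e + 1) ≫ ι T ≫ ρ T
  desc : ∀ {j d e : ℕ} (T : GTable (j + e + 1)) {Y : E}
    (f : Φ.D (j + d + 1) ⟶ Y) (g : S T ⟶ Y),
    Φ.σUp j (d + 1) ≫ f = Φ.τUp j (e + 1) ≫ ι T ≫ g → (S (.cons j d e T) ⟶ Y)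
  ι_desc : ∀ {j d e : ℕ} (T : GTable (j + e + 1)) {Y : E}
    (f : Φ.D (j + d + 1) ⟶ Y) (g : S T ⟶ Y) (h), ι (.cons j d e T) ≫ desc T f g h = f
  ρ_desc : ∀ {j d e : ℕ} (T : GTable (j + e + 1)) {Y : E}
    (f : Φ.D (j + d + 1) ⟶ Y) (g : S T ⟶ Y) (h), ρ T ≫ desc T f g h = g
  hom_ext : ∀ {j d e : ℕ} (T : GTable (j + e + 1)) {Y : E}
    (m m' : S (.cons j d e T) ⟶ Y),
    ι (.cons j d e T) ≫ m = ι (.cons j d e T) ≫ m' → ρ T ≫ m = ρ T ≫ m' → m = m'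

namespace GSums

variable {E : Type u} [Category.{v} E] {Φ : Coglob E} (GS : GSums Φ)

/-- The binary globular sum `D (j+k+1) ∐_{D j} D (j+k+1)`. -/
def Btab (j k : ℕ) : GTable (j + k + 1) := .cons j k k (.single (j + k + 1))

/-- First canonical morphism `ε₁ : D (j+k+1) ⟶ D (j+k+1) ∐_{D j} D (j+k+1)`. -/
def ε₁ (j k : ℕ) : Φ.D (j + k + 1) ⟶ GS.S (Btab j k) := GS.ι (Btab j k)

/-- Second canonical morphism `ε₂ : D (j+k+1) ⟶ D (j+k+1) ∐_{D j} D (j+k+1)`. -/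
def ε₂ (j k : ℕ) : Φ.D (j + k + 1) ⟶ GS.S (Btab j k) :=
  eqToHom (GS.single_eq (j + k + 1)).symm ≫ GS.ρ (GTable.single (j + k + 1))

/-- `C` is `(∞,0)`-contractible: every admissible pair admits a lifting; a pair
`(f, g) : D n ⟶ S` is admissible when `S` is a globular sum of dimension `≤ n + 1`
and `f, g` are globularly parallel. -/
def Contractible : Prop :=
  ∀ (n : ℕ) {i : ℕ} (T : GTable i), T.dim ≤ n + 1 →
    ∀ f g : Φ.D n ⟶ GS.S T, Φ.Par f g →
      ∃ h : Φ.D (n + 1) ⟶ GS.S T, Φ.σ n ≫ h = f ∧ Φ.τ n ≫ h = g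

/-- A presheaf `X` on `C` is a model (an ∞-groupoid of type `C`) when it sends each
globular sum to the corresponding iterated fiber product; equivalently each
amalgamation stage is sent to a pullback of sets. -/
def IsModel (X : Eᵒᵖ ⥤ Type w) : Prop :=
  ∀ {j d e : ℕ} (T : GTable (j + e + 1))
    (a : X.obj (op (Φ.D (j + d + 1)))) (b : X.obj (op (GS.S T))),
    X.map (Φ.σUp j (d + 1)).op a = X.map (Φ.τUp j (e + 1) ≫ GS.ι T).op b →
      ∃! x : X.obj (op (GS.S (.cons j d e T))),
        X.map (GS.ι (.cons j d e T)).op x = a ∧ X.map (GS.ρ T).op x = b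

/-- The amalgamated sum `f ∐_{D j} f` of an endo-cosimplicial-type map of globes. -/
def amalgMap (j k : ℕ) (f : Φ.D (j + k + 1) ⟶ Φ.D (j + k + 2))
    (hσ : Φ.σUp j (k + 1) ≫ f = Φ.σUp j (k + 2))
    (hτ : Φ.τUp j (k + 1) ≫ f = Φ.τUp j (k + 2)) :
    GS.S (Btab j k) ⟶ GS.S (Btab j (k + 1)) :=
  GS.desc (GTable.single (j + k + 1)) (f ≫ GS.ε₁ j (k + 1))
    (eqToHom (GS.single_eq (j + k + 1)) ≫ f ≫ GS.ε₂ j (k + 1)) (by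
      have h1 := GS.glue (j := j) (d := k + 1) (e := k + 1) (GTable.single (j + (k + 1) + 1))
      rw [GS.ι_single] at h1
      simp only [GS.ι_single, ← Category.assoc, hσ]
      simp only [Category.assoc, eqToHom_trans, eqToHom_refl, Category.id_comp]
      rw [← Category.assoc, hτ]
      exact h1)

/-- The amalgamated sum `σ ∐_{D j} σ`. -/
def amalgσ (j k : ℕ) : GS.S (Btab j k) ⟶ GS.S (Btab j (k + 1)) :=
  GS.amalgMap j k (Φ.σ (j + k + 1)) rfl (Φ.τUp_σ j k)

/-- The amalgamated sum `τ ∐_{D j} τ`. -/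
def amalgτ (j k : ℕ) : GS.S (Btab j k) ⟶ GS.S (Btab j (k + 1)) :=
  GS.amalgMap j k (Φ.τ (j + k + 1)) (Φ.σUp_τ j k) rfl

end GSums

/-- A pregroupoidal structure on a (contractible) globular extension: chosen
coherence morphisms `∇^i_j`, `κ_i` and `w^i_j` for compositions, units and inverses,
each a lifting of the corresponding admissible pair. -/
structure Pregroupoidal {E : Type u} [Category.{v} E] {Φ : Coglob E} (GS : GSums Φ) where
  nabla : ∀ j k, Φ.D (j + k + 1) ⟶ GS.S (GSums.Btab j k)
  kappa : ∀ n, Φ.D (n + 1) ⟶ Φ.D n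
  winv : ∀ j k, Φ.D (j + k + 1) ⟶ Φ.D (j + k + 1)
  kappa_σ : ∀ n, Φ.σ n ≫ kappa n = 𝟙 (Φ.D n)
  kappa_τ : ∀ n, Φ.τ n ≫ kappa n = 𝟙 (Φ.D n)
  nabla_σ₀ : ∀ j, Φ.σ j ≫ nabla j 0 = Φ.σ j ≫ GS.ε₂ j 0
  nabla_τ₀ : ∀ j, Φ.τ j ≫ nabla j 0 = Φ.τ j ≫ GS.ε₁ j 0
  nabla_σ : ∀ j k, Φ.σ (j + k + 1) ≫ nabla j (k + 1) = nabla j k ≫ GS.amalgσ j k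
  nabla_τ : ∀ j k, Φ.τ (j + k + 1) ≫ nabla j (k + 1) = nabla j k ≫ GS.amalgτ j k
  winv_σ₀ : ∀ j, Φ.σ j ≫ winv j 0 = Φ.τ j
  winv_τ₀ : ∀ j, Φ.τ j ≫ winv j 0 = Φ.σ j
  winv_σ : ∀ j k, Φ.σ (j + k + 1) ≫ winv j (k + 1) = winv j k ≫ Φ.σ (j + k + 1)
  winv_τ : ∀ j k, Φ.τ (j + k + 1) ≫ winv j (k + 1) = winv j k ≫ Φ.τ (j + k + 1)

section ModelOps

variable {E : Type u} [Category.{v} E] {Φ : Coglob E} {GS : GSums Φ}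
variable (X : Eᵒᵖ ⥤ Type w)

/-- The set of `n`-arrows of a globular presheaf. -/
def arr (n : ℕ) : Type w := X.obj (op (Φ.D n))

variable {X}

/-- Source of an `(n+1)`-arrow. -/
def asrc {n : ℕ} (u : arr (Φ := Φ) X (n + 1)) : arr (Φ := Φ) X n :=
  X.map (Φ.σ n).op u

/-- Target of an `(n+1)`-arrow. -/
def atgt {n : ℕ} (u : arr (Φ := Φ) X (n + 1)) : arr (Φ := Φ) X n :=
  X.map (Φ.τ n).op u

/-- Homotopy of `n`-arrows: existence of a connecting `(n+1)`-arrow. -/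
def Htp (n : ℕ) (u v : arr (Φ := Φ) X n) : Prop :=
  ∃ h : arr (Φ := Φ) X (n + 1), asrc h = u ∧ atgt h = v

/-- Composability in codimension `k+1`: the iterated `j`-source of `u` agrees with
the iterated `j`-target of `v`. -/
def Composable (j k : ℕ) (u v : arr (Φ := Φ) X (j + k + 1)) : Prop :=
  X.map (Φ.σUp j (k + 1)).op u = X.map (Φ.τUp j (k + 1)).op v

/-- The element of `X` of the binary globular sum determined by a composable pair,
via the model (fiber product) condition. -/
noncomputable def pairUp (hm : GS.IsModel X) {j k : ℕ}
    (u v : arr (Φ := Φ) X (j + k + 1)) (hc : Composable j k u v) :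
    X.obj (op (GS.S (GSums.Btab j k))) :=
  (hm (GTable.single (j + k + 1)) u
    (X.map (eqToHom (GS.single_eq (j + k + 1))).op v) (by
      rw [← types_comp_apply (X.map _) (X.map _) v, ← X.map_comp, ← op_comp, Category.assoc, GS.ι_single,
        eqToHom_trans, eqToHom_refl, Category.comp_id]
      exact hc)).exists.choose

/-- The composition `u *^{j+k+1}_j v` of arrows (`u` after `v`) induced by the chosen
morphism `∇^{j+k+1}_j`; defined as `u` on non-composable pairs. -/
noncomputable def gcomp (hm : GS.IsModel X) (P : Pregroupoidal GS)
    (j k : ℕ) (u v : arr (Φ := Φ) X (j + k + 1)) : arr (Φ := Φ) X (j + k + 1) := by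
  classical
  exact if hc : Composable j k u v then X.map (P.nabla j k).op (pairUp hm u v hc) else u

/-- The unit `(n+1)`-arrow on an `n`-arrow, induced by `κ_n`. -/
def gunit (P : Pregroupoidal GS) {n : ℕ} (u : arr (Φ := Φ) X n) :
    arr (Φ := Φ) X (n + 1) :=
  X.map (P.kappa n).op u

/-- The inverse `w^{j}_{j+k+1}` of an arrow. -/
def gwinv (P : Pregroupoidal GS) (j k : ℕ) (u : arr (Φ := Φ) X (j + k + 1)) :
    arr (Φ := Φ) X (j + k + 1) :=
  X.map (P.winv j k).op u

/-- Iterated counit `D n ⟶ D 0`. -/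
def kDown (P : Pregroupoidal GS) : ∀ n : ℕ, Φ.D n ⟶ Φ.D 0
  | 0 => 𝟙 _
  | n + 1 => P.kappa n ≫ kDown P n

/-- The iterated unit `n`-arrow on an object. -/
def unitIter (P : Pregroupoidal GS) (n : ℕ) (x : arr (Φ := Φ) X 0) :
    arr (Φ := Φ) X n :=
  X.map (kDown P n).op x

end ModelOps

section Stmt11

variable {E : Type u} [Category.{v} E] {Φ : Coglob E}
variable {X Y : Eᵒᵖ ⥤ Type w}

/-- `Π₁(f)` is full. -/
def Pi1Full (f : X ⟶ Y) : Prop :=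
  ∀ (a a' : arr (Φ := Φ) X 0) (β : arr (Φ := Φ) Y 1),
    asrc β = f.app (op (Φ.D 0)) a → atgt β = f.app (op (Φ.D 0)) a' →
    ∃ α : arr (Φ := Φ) X 1, asrc α = a ∧ atgt α = a' ∧
      Htp 1 (f.app (op (Φ.D 1)) α) β

/-- `Π₁(f)` is faithful. -/
def Pi1Faithful (f : X ⟶ Y) : Prop :=
  ∀ (a a' : arr (Φ := Φ) X 0) (α α' : arr (Φ := Φ) X 1),
    asrc α = a → atgt α = a' → asrc α' = a → atgt α' = a' →
    Htp 1 (f.app (op (Φ.D 1)) α) (f.app (op (Φ.D 1)) α') → Htp 1 α α'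

/-- `Π₁(f)` is essentially surjective (in a groupoid, an object is isomorphic to
`f(a)` iff there is a `1`-arrow connecting them). -/
def Pi1EssSurj (f : X ⟶ Y) : Prop :=
  ∀ b : arr (Φ := Φ) Y 0, ∃ a : arr (Φ := Φ) X 0,
    ∃ z : arr (Φ := Φ) Y 1, asrc z = f.app (op (Φ.D 0)) a ∧ atgt z = b

/-- The induced map `π_{m+2}(G, u, v) → π_{m+2}(H, f(u), f(v))` is surjective. -/
def PiUVSurj (f : X ⟶ Y) (m : ℕ) (u v : arr (Φ := Φ) X (m + 1)) : Prop :=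
  ∀ β : arr (Φ := Φ) Y (m + 2),
    asrc β = f.app (op (Φ.D (m + 1))) u → atgt β = f.app (op (Φ.D (m + 1))) v →
    ∃ α : arr (Φ := Φ) X (m + 2), asrc α = u ∧ atgt α = v ∧
      Htp (m + 2) (f.app (op (Φ.D (m + 2))) α) β

/-- The induced map `π_{m+2}(G, u, v) → π_{m+2}(H, f(u), f(v))` is injective. -/
def PiUVInj (f : X ⟶ Y) (m : ℕ) (u v : arr (Φ := Φ) X (m + 1)) : Prop :=
  ∀ α α' : arr (Φ := Φ) X (m + 2),
    asrc α = u → atgt α = v → asrc α' = u → atgt α' = v →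
    Htp (m + 2) (f.app (op (Φ.D (m + 2))) α) (f.app (op (Φ.D (m + 2))) α') →
    Htp (m + 2) α α'

end Stmt11

theorem weak_equivalence_conditions_3_iff_4 {E : Type u} [Category.{v} E]
    (Φ : Coglob E) (GS : GSums Φ) (hC : GS.Contractible)
    (X Y : Eᵒᵖ ⥤ Type w) (hmX : GS.IsModel X) (hmY : GS.IsModel Y)
    (f : X ⟶ Y) :
    -- (3)
    ((Pi1Full (Φ := Φ) f ∧ Pi1Faithful (Φ := Φ) f ∧ Pi1EssSurj (Φ := Φ) f) ∧
      (∀ (m : ℕ) (u v : arr (Φ := Φ) X (m + 1)),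
        asrc u = asrc v → atgt u = atgt v →
        PiUVSurj f m u v ∧ PiUVInj f m u v)) ↔
    -- (4)
    ((Pi1Full (Φ := Φ) f ∧ Pi1EssSurj (Φ := Φ) f) ∧
      (∀ (m : ℕ) (u v : arr (Φ := Φ) X (m + 1)),
        asrc u = asrc v → atgt u = atgt v → PiUVSurj f m u v)) := by
  constructor
  · rintro ⟨⟨hfull, _, hess⟩, h⟩
    exact ⟨⟨hfull, hess⟩, fun m u v h1 h2 => (h m u v h1 h2).1⟩
  · rintro ⟨⟨hfull, hess⟩, h⟩
    refine ⟨⟨hfull, ?_, hess⟩, fun m u v h1 h2 => ⟨h m u v h1 h2, ?_⟩⟩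
    · intro a a' α α' hs ht hs' ht' ⟨β, hβs, hβt⟩
      obtain ⟨γ, hγs, hγt, _⟩ :=
        h 0 α α' (hs.trans hs'.symm) (ht.trans ht'.symm) β hβs hβt
      exact ⟨γ, hγs, hγt⟩
    · intro α α' hs ht hs' ht' ⟨β, hβs, hβt⟩
      obtain ⟨γ, hγs, hγt, _⟩ :=
        h (m + 1) α α' (hs.trans hs'.symm) (ht.trans ht'.symm) β hβs hβt
      exact ⟨γ, hγs, hγt⟩
end

section
/- Let ℳ be a model category in which every object is fibrant, with a fixed cofibrant weakly contractible functor 𝔾 → ℳ. For an object X of ℳ, let G = Π_∞(X) be its fundamental ∞-groupoid, whose n-arrows are the morphisms D_n → X. Then: (i) two objects x, y : D_0 → X of G are homotopic in G iff x = y in Ho(ℳ), giving a natural bijection π_0(Π_∞(X)) ≅ π_0(X) = [*, X]; (ii) for n ≥ 1 and parallel (n−1)-arrows x, y, two n-arrows u, v : D_n → X from x to y are homotopic in G iff u = v as morphisms (D_n, i_n) → (X, (y,x)) in Ho(S_{n-1}\ℳ), giving a natural bijection π_n(Π_∞(X), x, y) ≅ [(D_n, i_n), (X, (y,x))]_{S_{n-1}\ℳ}.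 -/
/-!
STATEMENT 17: Let `ℳ` be a model category in which every object is fibrant, with a
fixed cofibrant weakly contractible functor `𝔾 → ℳ`.  For an object `X` of `ℳ`, let
`G = Π_∞(X)` be its fundamental ∞-groupoid, with `n`-arrows the morphisms
`D_n → X`.  Then:
(i) two objects `x, y : D₀ → X` of `G` are homotopic in `G` iff `x = y` in
`Ho(ℳ)`, giving a bijection `π₀(Π_∞(X)) ≅ π₀(X) = [*, X]`;
(ii) for `n ≥ 1` (written `n = m + 1`) and parallel `(n-1)`-arrows `x, y`, two
`n`-arrows `u, v : D_n → X` from `x` to `y` are homotopic in `G` iff `u = v` as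
morphisms `(D_n, i_n) → (X, (y, x))` in `Ho(S_{n-1}\ℳ)`, giving a bijection
`π_n(Π_∞(X), x, y) ≅ [(D_n, i_n), (X, (y, x))]_{S_{n-1}\ℳ}`.
The homotopy categories are realized as localizations at the weak equivalences
(resp. the morphisms of the under category whose underlying morphism is a weak
equivalence); an `n`-arrow `u` from `x` to `y` is a morphism `u : D_n ⟶ X` such
that `i_n ≫ u = (y, x) : S_{n-1} ⟶ X`.
-/

open CategoryTheory Opposite

universe w v u

open CategoryTheory CategoryTheory.Limits

/-- A (Quillen closed) model structure on a category: three classes of morphisms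
(weak equivalences, cofibrations, fibrations) satisfying two-out-of-three,
stability under retracts, the lifting axioms and the factorization axioms.
(Completeness assumptions are imposed separately via `HasFiniteLimits` etc.) -/
structure ModelStr (M : Type u) [Category.{v} M] where
  W : MorphismProperty M
  Cof : MorphismProperty M
  Fib : MorphismProperty M
  w_comp : ∀ {A B C : M} (f : A ⟶ B) (g : B ⟶ C), W f → W g → W (f ≫ g)
  w_cancel_left : ∀ {A B C : M} (f : A ⟶ B) (g : B ⟶ C), W (f ≫ g) → W g → W f
  w_cancel_right : ∀ {A B C : M} (f : A ⟶ B) (g : B ⟶ C), W (f ≫ g) → W f → W g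
  retract_stable : ∀ {A B A' B' : M} (f : A ⟶ B) (g : A' ⟶ B')
    (iA : A ⟶ A') (rA : A' ⟶ A) (iB : B ⟶ B') (rB : B' ⟶ B),
    iA ≫ rA = 𝟙 A → iB ≫ rB = 𝟙 B → iA ≫ g = f ≫ iB → g ≫ rB = rA ≫ f →
    (W g → W f) ∧ (Cof g → Cof f) ∧ (Fib g → Fib f)
  lift_cof_tfib : ∀ {A B X Y : M} (i : A ⟶ B) (p : X ⟶ Y),
    Cof i → Fib p → W p → HasLiftingProperty i p
  lift_tcof_fib : ∀ {A B X Y : M} (i : A ⟶ B) (p : X ⟶ Y),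
    Cof i → W i → Fib p → HasLiftingProperty i p
  fact_cof_tfib : ∀ {A B : M} (f : A ⟶ B),
    ∃ (Z : M) (i : A ⟶ Z) (p : Z ⟶ B), Cof i ∧ Fib p ∧ W p ∧ i ≫ p = f
  fact_tcof_fib : ∀ {A B : M} (f : A ⟶ B),
    ∃ (Z : M) (i : A ⟶ Z) (p : Z ⟶ B), Cof i ∧ W i ∧ Fib p ∧ i ≫ p = f

namespace ModelStr

variable {M : Type u} [Category.{v} M] (ms : ModelStr M)

/-- An object is weakly contractible if `X → *` is a weak equivalence. -/
def WeaklyContractible [HasTerminal M] (X : M) : Prop := ms.W (terminal.from X)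

/-- An object is fibrant if `X → *` is a fibration. -/
def Fibrant [HasTerminal M] (X : M) : Prop := ms.Fib (terminal.from X)

/-- An object is cofibrant if `∅ → X` is a cofibration. -/
def Cofibrant [HasInitial M] (X : M) : Prop := ms.Cof (initial.to X)

end ModelStr

section GlobMC

variable {M : Type u} [Category.{v} M]

/-- The globular sums of a coglobular object in a category with pushouts:
the iterated amalgamated sum associated to a table of dimensions, together with the
inclusion of the first globe. -/
noncomputable def gsumP [HasPushouts M] (Φ : Coglob M) :
    ∀ {i : ℕ}, GTable i → Σ' (S : M), (Φ.D i ⟶ S)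
  | _, .single i => ⟨Φ.D i, 𝟙 _⟩
  | _, .cons j d e T =>
    ⟨pushout (Φ.σUp j (d + 1)) (Φ.τUp j (e + 1) ≫ (gsumP Φ T).2),
      pushout.inl _ _⟩

/-- The spheres `S_{n-1}` of a coglobular object, with the inclusion
`i_n : S_{n-1} ⟶ D_n`: `S_{-1} = ∅` and `S_n = D_n ∐_{S_{n-1}} D_n`,
`i_{n+1} = (τ_{n+1}, σ_{n+1})`. -/
noncomputable def sphereP [HasInitial M] [HasPushouts M] (Φ : Coglob M) :
    ∀ n : ℕ, Σ' (Sob : M) (i : Sob ⟶ Φ.D n), i ≫ Φ.σ n = i ≫ Φ.τ n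
  | 0 => ⟨⊥_ M, initial.to _, initial.hom_ext _ _⟩
  | n + 1 =>
    ⟨pushout (sphereP Φ n).2.1 (sphereP Φ n).2.1,
      pushout.desc (Φ.τ n) (Φ.σ n) (sphereP Φ n).2.2.symm, by
        apply pushout.hom_ext
        · rw [pushout.inl_desc_assoc, pushout.inl_desc_assoc]
          exact Φ.relτ n
        · rw [pushout.inr_desc_assoc, pushout.inr_desc_assoc]
          exact Φ.relσ n⟩

/-- A coglobular object (functor `𝔾 → M`) is cofibrant if each latching morphism
`i_n : S_{n-1} ⟶ D_n` is a cofibration. -/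
def CofibrantCoglob [HasInitial M] [HasPushouts M] (ms : ModelStr M)
    (Φ : Coglob M) : Prop :=
  ∀ n : ℕ, ms.Cof (sphereP Φ n).2.1

/-- A coglobular object is weakly contractible if each globe `D_n` is weakly
contractible. -/
def WeaklyContractibleCoglob [HasTerminal M] (ms : ModelStr M) (Φ : Coglob M) :
    Prop :=
  ∀ n : ℕ, ms.WeaklyContractible (Φ.D n)

end GlobMC

/-- The weak equivalences of the under model category `S\ℳ`. -/
def underW {M : Type u} [Category.{v} M] (ms : ModelStr M) (S : M) :
    MorphismProperty (Under S) :=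
  fun _ _ φ => ms.W φ.right

/-- The morphism `(y, x) : S_n ⟶ X` determined by a parallel pair of `n`-arrows
(recall `S_n = D_n ∐_{S_{n-1}} D_n`). -/
noncomputable def parPair {M : Type u} [Category.{v} M] [HasInitial M]
    [HasPushouts M] (Φ : Coglob M) {m : ℕ} {X : M} (x y : Φ.D m ⟶ X)
    (hpar : (sphereP Φ m).2.1 ≫ y = (sphereP Φ m).2.1 ≫ x) :
    (sphereP Φ (m + 1)).1 ⟶ X :=
  pushout.desc y x hpar

section MS17Kit

open CategoryTheory Limits

set_option linter.unusedSectionVars false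

universe v' u'

namespace ModelStr

variable {C : Type u'} [Category.{v'} C] (ms : ModelStr C)

lemma w_id (X : C) : ms.W (𝟙 X) := by
  obtain ⟨Z, i, p, _, hwi, _, hip⟩ := ms.fact_tcof_fib (𝟙 X)
  exact (ms.retract_stable (𝟙 X) i (𝟙 X) (𝟙 X) i p (by simp) hip (by simp)
    (by simp [hip])).1 hwi

lemma cof_id (X : C) : ms.Cof (𝟙 X) := by
  obtain ⟨Z, i, p, hci, _, _, hip⟩ := ms.fact_tcof_fib (𝟙 X)
  exact (ms.retract_stable (𝟙 X) i (𝟙 X) (𝟙 X) i p (by simp) hip (by simp)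
    (by simp [hip])).2.1 hci

lemma fib_id (X : C) : ms.Fib (𝟙 X) := by
  obtain ⟨Z, i, p, _, hfp, _, hip⟩ := ms.fact_cof_tfib (𝟙 X)
  exact (ms.retract_stable (𝟙 X) p i p (𝟙 X) (𝟙 X) hip (by simp)
    (by simp [hip]) (by simp)).2.2 hfp

/-- transfer along an isomorphism of arrows -/
lemma mem_of_arrow_iso {A B A' B' : C} (eA : A ≅ A') (eB : B ≅ B')
    {f : A ⟶ B} {g : A' ⟶ B'} (h : eA.hom ≫ g = f ≫ eB.hom) :
    (ms.W g → ms.W f) ∧ (ms.Cof g → ms.Cof f) ∧ (ms.Fib g → ms.Fib f) := by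
  refine ms.retract_stable f g eA.hom eA.inv eB.hom eB.inv (by simp) (by simp) h ?_
  have : g = eA.inv ≫ f ≫ eB.hom := by rw [← h, Iso.inv_hom_id_assoc]
  rw [this]; simp

lemma w_iso {A B : C} (e : A ≅ B) : ms.W e.hom :=
  (ms.mem_of_arrow_iso e (Iso.refl B) (by simp)).1 (ms.w_id B)

lemma cof_iso {A B : C} (e : A ≅ B) : ms.Cof e.hom :=
  (ms.mem_of_arrow_iso e (Iso.refl B) (by simp)).2.1 (ms.cof_id B)

lemma fib_iso {A B : C} (e : A ≅ B) : ms.Fib e.hom :=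
  (ms.mem_of_arrow_iso e (Iso.refl B) (by simp)).2.2 (ms.fib_id B)

lemma fib_w_of_rlp {X Y : C} (p : X ⟶ Y)
    (h : ∀ {A B : C} (i : A ⟶ B), ms.Cof i → HasLiftingProperty i p) :
    ms.Fib p ∧ ms.W p := by
  obtain ⟨Z, i, q, hci, hfq, hwq, hiq⟩ := ms.fact_cof_tfib p
  haveI := h i hci
  have sq : CommSq (𝟙 X) i p q := ⟨by simp [hiq]⟩
  have h1 := sq.fac_left
  have h2 := sq.fac_right
  have H := ms.retract_stable p q i sq.lift (𝟙 Y) (𝟙 Y) h1 (by simp)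
    (by simp [hiq]) (by simp [h2])
  exact ⟨H.2.2 hfq, H.1 hwq⟩

lemma cof_w_of_llp {A B : C} (i : A ⟶ B)
    (h : ∀ {X Y : C} (p : X ⟶ Y), ms.Fib p → HasLiftingProperty i p) :
    ms.Cof i ∧ ms.W i := by
  obtain ⟨Z, j, q, hcj, hwj, hfq, hjq⟩ := ms.fact_tcof_fib i
  haveI := h q hfq
  have sq : CommSq j i q (𝟙 B) := ⟨by simp [hjq]⟩
  have h1 := sq.fac_left
  have h2 := sq.fac_right
  have H := ms.retract_stable i j (𝟙 A) (𝟙 A) sq.lift q (by simp) h2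
    (by simp [h1]) (by simp [hjq])
  exact ⟨H.2.1 hcj, H.1 hwj⟩

lemma fib_of_rlp {X Y : C} (p : X ⟶ Y)
    (h : ∀ {A B : C} (i : A ⟶ B), ms.Cof i → ms.W i → HasLiftingProperty i p) :
    ms.Fib p := by
  obtain ⟨Z, j, q, hcj, hwj, hfq, hjq⟩ := ms.fact_tcof_fib p
  haveI := h j hcj hwj
  have sq : CommSq (𝟙 X) j p q := ⟨by simp [hjq]⟩
  have h1 := sq.fac_left
  have h2 := sq.fac_right
  exact (ms.retract_stable p q j sq.lift (𝟙 Y) (𝟙 Y) h1 (by simp)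
    (by simp [hjq]) (by simp [h2])).2.2 hfq

lemma cof_of_llp {A B : C} (i : A ⟶ B)
    (h : ∀ {X Y : C} (p : X ⟶ Y), ms.Fib p → ms.W p → HasLiftingProperty i p) :
    ms.Cof i := by
  obtain ⟨Z, j, q, hcj, hfq, hwq, hjq⟩ := ms.fact_cof_tfib i
  haveI := h q hfq hwq
  have sq : CommSq j i q (𝟙 B) := ⟨by simp [hjq]⟩
  have h1 := sq.fac_left
  have h2 := sq.fac_right
  exact (ms.retract_stable i j (𝟙 A) (𝟙 A) sq.lift q (by simp) h2
    (by simp [h1]) (by simp [hjq])).2.1 hcj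

lemma cof_comp {A B D : C} {f : A ⟶ B} {g : B ⟶ D} (hf : ms.Cof f) (hg : ms.Cof g) :
    ms.Cof (f ≫ g) := by
  apply ms.cof_of_llp
  intro X Y p hfp hwp
  haveI := ms.lift_cof_tfib f p hf hfp hwp
  haveI := ms.lift_cof_tfib g p hg hfp hwp
  infer_instance

lemma fib_comp {X Y Z : C} {p : X ⟶ Y} {q : Y ⟶ Z} (hp : ms.Fib p) (hq : ms.Fib q) :
    ms.Fib (p ≫ q) := by
  apply ms.fib_of_rlp
  intro A B i hci hwi
  haveI := ms.lift_tcof_fib i p hci hwi hp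
  haveI := ms.lift_tcof_fib i q hci hwi hq
  infer_instance

/-- cobase change of a cofibration: `pushout.inr` -/
lemma cof_pushout_inr [HasPushouts C] {A B D : C} (f : A ⟶ B) (g : A ⟶ D)
    (hf : ms.Cof f) : ms.Cof (pushout.inr f g) := by
  apply ms.cof_of_llp
  intro X Y p hfp hwp
  constructor
  intro t b sq
  haveI := ms.lift_cof_tfib f p hf hfp hwp
  have sq' : CommSq (g ≫ t) f p (pushout.inl f g ≫ b) :=
    ⟨by rw [Category.assoc, sq.w, ← Category.assoc, ← pushout.condition, Category.assoc]⟩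
  refine ⟨⟨⟨pushout.desc sq'.lift t (by rw [sq'.fac_left]), by simp [pushout.inr_desc], ?_⟩⟩⟩
  apply pushout.hom_ext
  · rw [pushout.inl_desc_assoc, sq'.fac_right]
  · rw [pushout.inr_desc_assoc, sq.w]

lemma cof_pushout_inl [HasPushouts C] {A B D : C} (f : A ⟶ B) (g : A ⟶ D)
    (hg : ms.Cof g) : ms.Cof (pushout.inl f g) := by
  apply ms.cof_of_llp
  intro X Y p hfp hwp
  constructor
  intro t b sq
  haveI := ms.lift_cof_tfib g p hg hfp hwp
  have sq' : CommSq (f ≫ t) g p (pushout.inr f g ≫ b) :=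
    ⟨by rw [Category.assoc, sq.w, ← Category.assoc, pushout.condition, Category.assoc]⟩
  refine ⟨⟨⟨pushout.desc t sq'.lift (by rw [sq'.fac_left]), by simp [pushout.inl_desc], ?_⟩⟩⟩
  apply pushout.hom_ext
  · rw [pushout.inl_desc_assoc, sq.w]
  · rw [pushout.inr_desc_assoc, sq'.fac_right]

/-- base change of a trivial fibration: `pullback.fst` -/
lemma tfib_pullback_fst [HasPullbacks C] {X Y Z : C} (f : X ⟶ Z) (g : Y ⟶ Z)
    (hfg : ms.Fib g) (hwg : ms.W g) :
    ms.Fib (pullback.fst f g) ∧ ms.W (pullback.fst f g) := by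
  apply ms.fib_w_of_rlp
  intro A B i hci
  constructor
  intro t b sq
  haveI := ms.lift_cof_tfib i g hci hfg hwg
  have sq' : CommSq (t ≫ pullback.snd f g) i g (b ≫ f) :=
    ⟨by rw [Category.assoc, ← pullback.condition, ← Category.assoc, sq.w, Category.assoc]⟩
  refine ⟨⟨⟨pullback.lift b sq'.lift (by rw [sq'.fac_right]), ?_, by simp [pullback.lift_fst]⟩⟩⟩
  apply pullback.hom_ext
  · rw [Category.assoc, pullback.lift_fst, sq.w]
  · rw [Category.assoc, pullback.lift_snd, sq'.fac_left]

/-- the projection from a binary product is a fibration when every object is fibrant -/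
lemma fib_fst [HasTerminal C] [HasBinaryProducts C]
    (hfibAll : ∀ Z : C, ms.Fib (terminal.from Z)) (X Y : C) :
    ms.Fib (prod.fst : X ⨯ Y ⟶ X) := by
  apply ms.fib_of_rlp
  intro A B i hci hwi
  constructor
  intro t b sq
  haveI := ms.lift_tcof_fib i (terminal.from Y) hci hwi (hfibAll Y)
  have sq' : CommSq (t ≫ prod.snd) i (terminal.from Y) (terminal.from B) :=
    ⟨terminal.hom_ext _ _⟩
  refine ⟨⟨⟨prod.lift b sq'.lift, ?_, by simp [prod.lift_fst]⟩⟩⟩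
  apply Limits.prod.hom_ext
  · rw [Category.assoc, prod.lift_fst, sq.w]
  · rw [Category.assoc, prod.lift_snd, sq'.fac_left]

end ModelStr

end MS17Kit

section MS17Htpy

open CategoryTheory Limits

set_option linter.unusedSectionVars false

universe v' u'

namespace ModelStr

variable {C : Type u'} [Category.{v'} C]

/-- A path object. -/
structure PathObj (ms : ModelStr C) (X : C) [HasBinaryProducts C] where
  P : C
  ι : X ⟶ P
  π : P ⟶ X ⨯ X
  hι : ι ≫ π = prod.lift (𝟙 X) (𝟙 X)
  hWι : ms.W ι
  hFibπ : ms.Fib π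

section PathObjLemmas

variable {ms : ModelStr C} [HasTerminal C] [HasBinaryProducts C] {X : C}

/-- first projection of a path object -/
noncomputable def PathObj.π₀ (po : ms.PathObj X) : po.P ⟶ X := po.π ≫ prod.fst

/-- second projection of a path object -/
noncomputable def PathObj.π₁ (po : ms.PathObj X) : po.P ⟶ X := po.π ≫ prod.snd

lemma PathObj.ιπ₀ (po : ms.PathObj X) : po.ι ≫ po.π₀ = 𝟙 X := by
  rw [PathObj.π₀, ← Category.assoc, po.hι, prod.lift_fst]

lemma PathObj.ιπ₁ (po : ms.PathObj X) : po.ι ≫ po.π₁ = 𝟙 X := by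
  rw [PathObj.π₁, ← Category.assoc, po.hι, prod.lift_snd]

lemma PathObj.fibπ₀ (po : ms.PathObj X)
    (hfibAll : ∀ Z : C, ms.Fib (terminal.from Z)) : ms.Fib po.π₀ :=
  ms.fib_comp po.hFibπ (ms.fib_fst hfibAll X X)

lemma PathObj.wπ₀ (po : ms.PathObj X) : ms.W po.π₀ :=
  ms.w_cancel_right po.ι po.π₀ (by rw [po.ιπ₀]; exact ms.w_id X) po.hWι

lemma PathObj.wπ₁ (po : ms.PathObj X) : ms.W po.π₁ :=
  ms.w_cancel_right po.ι po.π₁ (by rw [po.ιπ₁]; exact ms.w_id X) po.hWι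

/-- the reversed path object -/
noncomputable def PathObj.swap (po : ms.PathObj X) : ms.PathObj X where
  P := po.P
  ι := po.ι
  π := po.π ≫ (Limits.prod.braiding X X).hom
  hι := by
    rw [← Category.assoc, po.hι]
    apply Limits.prod.hom_ext <;> simp [prod.lift_fst, prod.lift_snd]
  hWι := po.hWι
  hFibπ := ms.fib_comp po.hFibπ (ms.fib_iso (Limits.prod.braiding X X))

lemma PathObj.swap_π₀ (po : ms.PathObj X) : po.swap.π₀ = po.π₁ := by
  simp [PathObj.swap, PathObj.π₀, PathObj.π₁, prod.lift_fst, prod.lift_snd]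

lemma PathObj.swap_π₁ (po : ms.PathObj X) : po.swap.π₁ = po.π₀ := by
  simp [PathObj.swap, PathObj.π₀, PathObj.π₁, prod.lift_fst, prod.lift_snd]

lemma pathObj_nonempty (ms : ModelStr C) (X : C) : Nonempty (ms.PathObj X) := by
  obtain ⟨P, ι, π, hcι, hwι, hfπ, hfac⟩ := ms.fact_tcof_fib (prod.lift (𝟙 X) (𝟙 X))
  exact ⟨⟨P, ι, π, hfac, hwι, hfπ⟩⟩

end PathObjLemmas

/-- The data of a (very good) cylinder object on `A`, together with an explicit
binary coproduct `AA` of `A` with itself, and the assumption that `A` is cofibrant,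
expressed through the lifting of morphisms out of `A` along trivial fibrations. -/
structure CylData (ms : ModelStr C) (A : C) where
  Cyl : C
  d0 : A ⟶ Cyl
  d1 : A ⟶ Cyl
  r : Cyl ⟶ A
  hr0 : d0 ≫ r = 𝟙 A
  hr1 : d1 ≫ r = 𝟙 A
  hW0 : ms.W d0
  hW1 : ms.W d1
  hC0 : ms.Cof d0
  hC1 : ms.Cof d1
  AA : C
  in0 : A ⟶ AA
  in1 : A ⟶ AA
  desc : ∀ {Z : C}, (A ⟶ Z) → (A ⟶ Z) → (AA ⟶ Z)
  desc_in0 : ∀ {Z : C} (f g : A ⟶ Z), in0 ≫ desc f g = f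
  desc_in1 : ∀ {Z : C} (f g : A ⟶ Z), in1 ≫ desc f g = g
  desc_comp : ∀ {Z Z' : C} (f g : A ⟶ Z) (h : Z ⟶ Z'),
    desc f g ≫ h = desc (f ≫ h) (g ≫ h)
  hCq : ms.Cof (desc d0 d1)
  hCofA : ∀ {Y Z : C} (p : Y ⟶ Z), ms.Fib p → ms.W p → ∀ v : A ⟶ Z,
    ∃ u : A ⟶ Y, u ≫ p = v

variable {ms : ModelStr C} {A : C}

/-- the left homotopy relation via the chosen cylinder -/
def CylData.Rel (cd : ms.CylData A) {X : C} (u v : A ⟶ X) : Prop :=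
  ∃ h : cd.Cyl ⟶ X, cd.d0 ≫ h = u ∧ cd.d1 ≫ h = v

lemma CylData.hWr (cd : ms.CylData A) : ms.W cd.r :=
  ms.w_cancel_right cd.d0 cd.r (by rw [cd.hr0]; exact ms.w_id A) cd.hW0

lemma CylData.rel_refl (cd : ms.CylData A) {X : C} (u : A ⟶ X) : cd.Rel u u :=
  ⟨cd.r ≫ u, by rw [← Category.assoc, cd.hr0, Category.id_comp],
    by rw [← Category.assoc, cd.hr1, Category.id_comp]⟩

lemma CylData.rel_comp (cd : ms.CylData A) {X Y : C} {u v : A ⟶ X}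
    (h : cd.Rel u v) (f : X ⟶ Y) : cd.Rel (u ≫ f) (v ≫ f) := by
  obtain ⟨H, h0, h1⟩ := h
  exact ⟨H ≫ f, by rw [← Category.assoc, h0], by rw [← Category.assoc, h1]⟩

section Conversions

variable [HasTerminal C] [HasBinaryProducts C]

/-- a left homotopy yields a right homotopy with respect to any path object -/
lemma CylData.right_of_left (cd : ms.CylData A) {X : C} (po : ms.PathObj X)
    {u v : A ⟶ X} (h : cd.Rel u v) :
    ∃ K : A ⟶ po.P, K ≫ po.π₀ = u ∧ K ≫ po.π₁ = v := by
  obtain ⟨H, h0, h1⟩ := h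
  haveI := ms.lift_tcof_fib cd.d0 po.π cd.hC0 cd.hW0 po.hFibπ
  have sq : CommSq (u ≫ po.ι) cd.d0 po.π (prod.lift (cd.r ≫ u) H) := by
    constructor
    rw [Category.assoc, po.hι]
    apply Limits.prod.hom_ext
    · simp [reassoc_of% cd.hr0, h0]
    · simp [reassoc_of% cd.hr0, h0]
  refine ⟨cd.d1 ≫ sq.lift, ?_, ?_⟩
  · rw [PathObj.π₀, Category.assoc, ← Category.assoc sq.lift, sq.fac_right]
    simp [reassoc_of% cd.hr1, prod.lift_fst]
  · rw [PathObj.π₁, Category.assoc, ← Category.assoc sq.lift, sq.fac_right]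
    simp [h1, prod.lift_snd]

/-- a right homotopy with respect to any path object yields a left homotopy -/
lemma CylData.left_of_right (cd : ms.CylData A)
    (hfibAll : ∀ Z : C, ms.Fib (terminal.from Z)) {X : C} (po : ms.PathObj X)
    {u v : A ⟶ X} (K : A ⟶ po.P) (h0 : K ≫ po.π₀ = u) (h1 : K ≫ po.π₁ = v) :
    cd.Rel u v := by
  haveI := ms.lift_cof_tfib (cd.desc cd.d0 cd.d1) po.π₀ cd.hCq
    (po.fibπ₀ hfibAll) po.wπ₀
  have sq : CommSq (cd.desc (u ≫ po.ι) K) (cd.desc cd.d0 cd.d1) po.π₀ (cd.r ≫ u) := by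
    constructor
    rw [cd.desc_comp, cd.desc_comp]
    congr 1
    · rw [Category.assoc, po.ιπ₀, Category.comp_id, ← Category.assoc, cd.hr0,
        Category.id_comp]
    · rw [h0, ← Category.assoc, cd.hr1, Category.id_comp]
  refine ⟨sq.lift ≫ po.π₁, ?_, ?_⟩
  · have : cd.d0 ≫ sq.lift = u ≫ po.ι := by
      have := sq.fac_left
      have e0 : cd.in0 ≫ (cd.desc cd.d0 cd.d1) ≫ sq.lift
          = cd.in0 ≫ cd.desc (u ≫ po.ι) K := by rw [this]
      rw [← Category.assoc, cd.desc_in0, cd.desc_in0] at e0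
      exact e0
    rw [← Category.assoc, this, Category.assoc, po.ιπ₁, Category.comp_id]
  · have : cd.d1 ≫ sq.lift = K := by
      have := sq.fac_left
      have e1 : cd.in1 ≫ (cd.desc cd.d0 cd.d1) ≫ sq.lift
          = cd.in1 ≫ cd.desc (u ≫ po.ι) K := by rw [this]
      rw [← Category.assoc, cd.desc_in1, cd.desc_in1] at e1
      exact e1
    rw [← Category.assoc, this, h1]

lemma CylData.rel_symm (cd : ms.CylData A)
    (hfibAll : ∀ Z : C, ms.Fib (terminal.from Z)) {X : C} {u v : A ⟶ X}
    (h : cd.Rel u v) : cd.Rel v u := by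
  obtain ⟨po⟩ := ms.pathObj_nonempty X
  obtain ⟨K, h0, h1⟩ := cd.right_of_left po h
  exact cd.left_of_right hfibAll po.swap K
    (by rw [po.swap_π₀]; exact h1) (by rw [po.swap_π₁]; exact h0)

lemma CylData.rel_trans [HasPullbacks C] (cd : ms.CylData A)
    (hfibAll : ∀ Z : C, ms.Fib (terminal.from Z)) {X : C}
    {u v w : A ⟶ X} (huv : cd.Rel u v) (hvw : cd.Rel v w) : cd.Rel u w := by
  obtain ⟨po⟩ := ms.pathObj_nonempty X
  obtain ⟨K₁, k10, k11⟩ := cd.right_of_left po huv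
  obtain ⟨K₂, k20, k21⟩ := cd.right_of_left po hvw
  -- composition of path objects
  set P' : C := pullback po.π₁ po.π₀ with hP'
  set pr1 : P' ⟶ po.P := pullback.fst po.π₁ po.π₀ with hpr1
  set pr2 : P' ⟶ po.P := pullback.snd po.π₁ po.π₀ with hpr2
  set π' : P' ⟶ X ⨯ X := prod.lift (pr1 ≫ po.π₀) (pr2 ≫ po.π₁) with hπ'
  have hcond : pr1 ≫ po.π₁ = pr2 ≫ po.π₀ := pullback.condition
  have hπ'fst : π' ≫ prod.fst = pr1 ≫ po.π₀ := prod.lift_fst _ _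
  have hπ'snd : π' ≫ prod.snd = pr2 ≫ po.π₁ := prod.lift_snd _ _
  have hFibπ' : ms.Fib π' := by
    apply ms.fib_of_rlp
    intro A' B' i hci hwi
    constructor
    intro t b sq
    have hw0 : t ≫ pr1 ≫ po.π₀ = i ≫ b ≫ prod.fst := by
      have h' : (t ≫ π') ≫ prod.fst = (i ≫ b) ≫ prod.fst := by rw [sq.w]
      rw [Category.assoc, hπ'fst] at h'
      rw [h', Category.assoc]
    have hw1 : t ≫ pr2 ≫ po.π₁ = i ≫ b ≫ prod.snd := by
      have h' : (t ≫ π') ≫ prod.snd = (i ≫ b) ≫ prod.snd := by rw [sq.w]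
      rw [Category.assoc, hπ'snd] at h'
      rw [h', Category.assoc]
    haveI := ms.lift_tcof_fib i (terminal.from X) hci hwi (hfibAll X)
    have sqm : CommSq (t ≫ pr1 ≫ po.π₁) i (terminal.from X) (terminal.from B') :=
      ⟨terminal.hom_ext _ _⟩
    set m : B' ⟶ X := sqm.lift with hm
    have him : i ≫ m = t ≫ pr1 ≫ po.π₁ := sqm.fac_left
    haveI := ms.lift_tcof_fib i po.π hci hwi po.hFibπ
    have sq1 : CommSq (t ≫ pr1) i po.π (prod.lift (b ≫ prod.fst) m) := by
      constructor
      apply Limits.prod.hom_ext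
      · simp only [Category.assoc, prod.lift_fst]
        show t ≫ pr1 ≫ po.π₀ = _
        rw [hw0]
      · simp only [Category.assoc, prod.lift_snd]
        show t ≫ pr1 ≫ po.π₁ = _
        rw [him]
    have sq2 : CommSq (t ≫ pr2) i po.π (prod.lift m (b ≫ prod.snd)) := by
      constructor
      apply Limits.prod.hom_ext
      · simp only [Category.assoc, prod.lift_fst]
        show t ≫ pr2 ≫ po.π₀ = i ≫ m
        rw [him, ← hcond]
      · simp only [Category.assoc, prod.lift_snd]
        show t ≫ pr2 ≫ po.π₁ = _
        rw [hw1]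
    have hmid : sq1.lift ≫ po.π₁ = sq2.lift ≫ po.π₀ := by
      show sq1.lift ≫ po.π ≫ prod.snd = sq2.lift ≫ po.π ≫ prod.fst
      rw [← Category.assoc, sq1.fac_right, ← Category.assoc, sq2.fac_right,
        prod.lift_snd, prod.lift_fst]
    refine ⟨⟨⟨pullback.lift sq1.lift sq2.lift hmid, ?_, ?_⟩⟩⟩
    · apply pullback.hom_ext
      · rw [Category.assoc, pullback.lift_fst, sq1.fac_left]
      · rw [Category.assoc, pullback.lift_snd, sq2.fac_left]
    · apply Limits.prod.hom_ext
      · rw [Category.assoc, hπ'fst, ← Category.assoc, pullback.lift_fst]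
        show sq1.lift ≫ po.π ≫ prod.fst = _
        rw [← Category.assoc, sq1.fac_right, prod.lift_fst]
      · rw [Category.assoc, hπ'snd, ← Category.assoc, pullback.lift_snd]
        show sq2.lift ≫ po.π ≫ prod.snd = _
        rw [← Category.assoc, sq2.fac_right, prod.lift_snd]
  have hι'cond : po.ι ≫ po.π₁ = po.ι ≫ po.π₀ := by rw [po.ιπ₀, po.ιπ₁]
  set ι' : X ⟶ P' := pullback.lift po.ι po.ι hι'cond with hι'
  have hWpr1 := ms.tfib_pullback_fst po.π₁ po.π₀ (po.fibπ₀ hfibAll) po.wπ₀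
  have hWι' : ms.W ι' := by
    apply ms.w_cancel_left ι' pr1 _ hWpr1.2
    have he : ι' ≫ pr1 = po.ι := pullback.lift_fst _ _ _
    rw [he]
    exact po.hWι
  have hagain : ι' ≫ π' = prod.lift (𝟙 X) (𝟙 X) := by
    apply Limits.prod.hom_ext
    · rw [Category.assoc, hπ'fst, prod.lift_fst, ← Category.assoc,
        pullback.lift_fst, po.ιπ₀]
    · rw [Category.assoc, hπ'snd, prod.lift_snd, ← Category.assoc,
        pullback.lift_snd, po.ιπ₁]
  set po' : ms.PathObj X := ⟨P', ι', π', hagain, hWι', hFibπ'⟩ with hpo'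
  have hKcond : K₁ ≫ po.π₁ = K₂ ≫ po.π₀ := by rw [k11, k20]
  refine cd.left_of_right hfibAll po' (pullback.lift K₁ K₂ hKcond) ?_ ?_
  · show pullback.lift K₁ K₂ hKcond ≫ π' ≫ prod.fst = u
    rw [hπ'fst, ← Category.assoc, pullback.lift_fst, k10]
  · show pullback.lift K₁ K₂ hKcond ≫ π' ≫ prod.snd = w
    rw [hπ'snd, ← Category.assoc, pullback.lift_snd, k21]

/-- homotopies can be cancelled along weak equivalences -/
lemma CylData.rel_cancel (cd : ms.CylData A)
    (hfibAll : ∀ Z : C, ms.Fib (terminal.from Z)) {Y Z : C} (w : Y ⟶ Z)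
    (hw : ms.W w) {u v : A ⟶ Y} (h : cd.Rel (u ≫ w) (v ≫ w)) : cd.Rel u v := by
  obtain ⟨Y', j, p, hcj, hwj, hfp, hjp⟩ := ms.fact_tcof_fib w
  have hwp : ms.W p := ms.w_cancel_right j p (by rw [hjp]; exact hw) hwj
  -- step 1 : cancel the trivial fibration p
  have step1 : cd.Rel (u ≫ j) (v ≫ j) := by
    obtain ⟨H, h0, h1⟩ := h
    haveI := ms.lift_cof_tfib (cd.desc cd.d0 cd.d1) p cd.hCq hfp hwp
    have sq : CommSq (cd.desc (u ≫ j) (v ≫ j)) (cd.desc cd.d0 cd.d1) p H := by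
      constructor
      rw [cd.desc_comp, cd.desc_comp, h0, h1]
      congr 1 <;> rw [Category.assoc, hjp]
    refine ⟨sq.lift, ?_, ?_⟩
    · have := sq.fac_left
      have e0 : cd.in0 ≫ (cd.desc cd.d0 cd.d1) ≫ sq.lift
          = cd.in0 ≫ cd.desc (u ≫ j) (v ≫ j) := by rw [this]
      rw [← Category.assoc, cd.desc_in0, cd.desc_in0] at e0
      exact e0
    · have := sq.fac_left
      have e1 : cd.in1 ≫ (cd.desc cd.d0 cd.d1) ≫ sq.lift
          = cd.in1 ≫ cd.desc (u ≫ j) (v ≫ j) := by rw [this]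
      rw [← Category.assoc, cd.desc_in1, cd.desc_in1] at e1
      exact e1
  -- step 2 : retract the trivial cofibration j
  haveI := ms.lift_tcof_fib j (terminal.from Y) hcj hwj (hfibAll Y)
  have sqs : CommSq (𝟙 Y) j (terminal.from Y) (terminal.from Y') :=
    ⟨terminal.hom_ext _ _⟩
  obtain ⟨H, h0, h1⟩ := step1
  refine ⟨H ≫ sqs.lift, ?_, ?_⟩
  · rw [← Category.assoc, h0, Category.assoc, sqs.fac_left, Category.comp_id]
  · rw [← Category.assoc, h1, Category.assoc, sqs.fac_left, Category.comp_id]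

/-- morphisms out of `A` lift along weak equivalences, up to homotopy -/
lemma CylData.rel_lift (cd : ms.CylData A)
    (hfibAll : ∀ Z : C, ms.Fib (terminal.from Z)) {Y Z : C} (w : Y ⟶ Z)
    (hw : ms.W w) (v : A ⟶ Z) : ∃ u : A ⟶ Y, cd.Rel (u ≫ w) v := by
  obtain ⟨Y', j, p, hcj, hwj, hfp, hjp⟩ := ms.fact_tcof_fib w
  have hwp : ms.W p := ms.w_cancel_right j p (by rw [hjp]; exact hw) hwj
  obtain ⟨u', hu'⟩ := cd.hCofA p hfp hwp v
  haveI := ms.lift_tcof_fib j (terminal.from Y) hcj hwj (hfibAll Y)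
  have sqs : CommSq (𝟙 Y) j (terminal.from Y) (terminal.from Y') :=
    ⟨terminal.hom_ext _ _⟩
  set s : Y' ⟶ Y := sqs.lift with hs
  have hjs : j ≫ s = 𝟙 Y := sqs.fac_left
  obtain ⟨po⟩ := ms.pathObj_nonempty Y'
  haveI := ms.lift_tcof_fib j po.π hcj hwj po.hFibπ
  have sqH : CommSq (j ≫ po.ι) j po.π (prod.lift (s ≫ j) (𝟙 Y')) := by
    constructor
    rw [Category.assoc, po.hι]
    apply Limits.prod.hom_ext
    · simp [reassoc_of% hjs]
    · simp [prod.lift_snd]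
  have hK0 : (u' ≫ sqH.lift) ≫ po.π₀ = u' ≫ (s ≫ j) := by
    rw [PathObj.π₀, Category.assoc, ← Category.assoc sqH.lift, sqH.fac_right]
    simp [prod.lift_fst]
  have hK1 : (u' ≫ sqH.lift) ≫ po.π₁ = u' := by
    rw [PathObj.π₁, Category.assoc, ← Category.assoc sqH.lift, sqH.fac_right]
    simp [prod.lift_snd]
  have hrel : cd.Rel (u' ≫ (s ≫ j)) u' :=
    cd.left_of_right hfibAll po (u' ≫ sqH.lift) hK0 hK1
  refine ⟨u' ≫ s, ?_⟩
  have := cd.rel_comp hrel p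
  rw [hu'] at this
  have he : (u' ≫ (s ≫ j)) ≫ p = (u' ≫ s) ≫ w := by
    rw [← hjp]
    simp only [Category.assoc]
  rwa [he] at this
end Conversions

end ModelStr

end MS17Htpy

section MS17Loc

open CategoryTheory Limits Opposite

set_option linter.unusedSectionVars false

universe v' u'

namespace ModelStr

variable {C : Type u'} [Category.{v'} C]
variable [HasTerminal C] [HasBinaryProducts C] [HasPullbacks C]
variable {ms : ModelStr C} {A : C}

lemma CylData.rel_equivalence (cd : ms.CylData A)
    (hfibAll : ∀ Z : C, ms.Fib (terminal.from Z)) (X : C) :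
    Equivalence (fun u v : A ⟶ X => cd.Rel u v) :=
  ⟨fun u => cd.rel_refl u, fun h => cd.rel_symm hfibAll h,
    fun h h' => cd.rel_trans hfibAll h h'⟩

lemma CylData.quot_mk_eq_iff (cd : ms.CylData A)
    (hfibAll : ∀ Z : C, ms.Fib (terminal.from Z)) {X : C} (u v : A ⟶ X) :
    (Quot.mk (fun a b : A ⟶ X => cd.Rel a b) u
      = Quot.mk (fun a b : A ⟶ X => cd.Rel a b) v) ↔ cd.Rel u v := by
  rw [Quot.eq]
  exact (cd.rel_equivalence hfibAll X).eqvGen_iff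

lemma CylData.q_map_eq (cd : ms.CylData A) {X : C} {u v : A ⟶ X}
    (h : cd.Rel u v) : ms.W.Q.map u = ms.W.Q.map v := by
  obtain ⟨H, h0, h1⟩ := h
  haveI : IsIso (ms.W.Q.map cd.r) := ms.W.Q_inverts cd.r cd.hWr
  have hd : ms.W.Q.map cd.d0 = ms.W.Q.map cd.d1 := by
    rw [← cancel_mono (ms.W.Q.map cd.r), ← Functor.map_comp, ← Functor.map_comp,
      cd.hr0, cd.hr1]
  rw [← h0, ← h1, Functor.map_comp, Functor.map_comp, hd]

/-- The functor of homotopy classes of maps out of `A`. -/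
noncomputable def CylData.F (cd : ms.CylData A) : C ⥤ Type (max u' v') where
  obj X := ULift.{u'} (Quot (fun u v : A ⟶ X => cd.Rel u v))
  map {X Y} f := TypeCat.ofHom fun x => ⟨Quot.lift (fun u => Quot.mk _ (u ≫ f))
    (fun u v h => Quot.sound (cd.rel_comp h f)) x.down⟩
  map_id X := by
    ext x
    obtain ⟨x⟩ := x
    induction x using Quot.ind with
    | _ u => simp
  map_comp {X Y Z} f g := by
    ext x
    obtain ⟨x⟩ := x
    induction x using Quot.ind with
    | _ u => simp

lemma CylData.F_map_mk (cd : ms.CylData A) {X Y : C} (f : X ⟶ Y) (u : A ⟶ X) :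
    cd.F.map f ⟨Quot.mk _ u⟩ = ⟨Quot.mk _ (u ≫ f)⟩ := rfl

lemma CylData.F_inverts (cd : ms.CylData A)
    (hfibAll : ∀ Z : C, ms.Fib (terminal.from Z)) :
    ms.W.IsInvertedBy cd.F := by
  intro X Y w hw
  rw [CategoryTheory.isIso_iff_bijective]
  constructor
  · rintro ⟨x⟩ ⟨y⟩ hxy
    induction x using Quot.ind with
    | _ u =>
    induction y using Quot.ind with
    | _ v =>
    have h1 : Quot.mk (fun a b : A ⟶ Y => cd.Rel a b) (u ≫ w)
        = Quot.mk (fun a b : A ⟶ Y => cd.Rel a b) (v ≫ w) :=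
      congrArg ULift.down hxy
    have h2 : cd.Rel (u ≫ w) (v ≫ w) := (cd.quot_mk_eq_iff hfibAll _ _).1 h1
    exact congrArg ULift.up (Quot.sound (cd.rel_cancel hfibAll w hw h2))
  · rintro ⟨y⟩
    induction y using Quot.ind with
    | _ v =>
    obtain ⟨u, hu⟩ := cd.rel_lift hfibAll w hw v
    exact ⟨⟨Quot.mk _ u⟩, congrArg ULift.up (Quot.sound hu)⟩

variable (hfibAll : ∀ Z : C, ms.Fib (terminal.from Z))

/-- the lift of the homotopy-classes functor to the localization -/
noncomputable def CylData.Fp (cd : ms.CylData A)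
    (hfibAll : ∀ Z : C, ms.Fib (terminal.from Z)) :
    ms.W.Localization ⥤ Type (max u' v') :=
  Localization.lift cd.F (cd.F_inverts hfibAll) ms.W.Q

/-- comparison isomorphism -/
noncomputable def CylData.ρ (cd : ms.CylData A)
    (hfibAll : ∀ Z : C, ms.Fib (terminal.from Z)) :
    ms.W.Q ⋙ cd.Fp hfibAll ≅ cd.F :=
  Localization.fac _ _ _

/-- base point -/
noncomputable def CylData.x0 (cd : ms.CylData A)
    (hfibAll : ∀ Z : C, ms.Fib (terminal.from Z)) :
    (cd.Fp hfibAll).obj (ms.W.Q.obj A) :=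
  (cd.ρ hfibAll).inv.app A ⟨Quot.mk _ (𝟙 A)⟩

lemma CylData.theta_q (cd : ms.CylData A)
    (hfibAll : ∀ Z : C, ms.Fib (terminal.from Z)) {Y : C} (f : A ⟶ Y) :
    (cd.ρ hfibAll).hom.app Y ((cd.Fp hfibAll).map (ms.W.Q.map f) (cd.x0 hfibAll))
      = ⟨Quot.mk _ f⟩ := by
  have nat := NatTrans.naturality_apply (cd.ρ hfibAll).hom f (cd.x0 hfibAll)
  have hreset : (cd.ρ hfibAll).hom.app A (cd.x0 hfibAll)
      = ⟨Quot.mk _ (𝟙 A)⟩ :=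
    ConcreteCategory.congr_hom ((cd.ρ hfibAll).inv_hom_id_app A) _
  refine nat.trans ?_
  rw [hreset, cd.F_map_mk, Category.id_comp]

/-- homotopy iff equality in the homotopy category -/
theorem CylData.rel_iff_q_eq (cd : ms.CylData A)
    (hfibAll : ∀ Z : C, ms.Fib (terminal.from Z)) {X : C} (u v : A ⟶ X) :
    cd.Rel u v ↔ ms.W.Q.map u = ms.W.Q.map v := by
  constructor
  · exact cd.q_map_eq
  · intro h
    have h1 : (⟨Quot.mk _ u⟩ : ULift.{u'} (Quot (fun a b : A ⟶ X => cd.Rel a b)))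
        = ⟨Quot.mk _ v⟩ := by
      rw [← cd.theta_q hfibAll u, h, cd.theta_q hfibAll v]
    exact (cd.quot_mk_eq_iff hfibAll u v).1 (congrArg ULift.down h1)

/-- the coyoneda functor at `A` in the localization -/
noncomputable def CylData.Hco (cd : ms.CylData A) :
    ms.W.Localization ⥤ Type (max u' v') :=
  coyoneda.obj (op (ms.W.Q.obj A))

/-- the nat trans `Hco ⟶ Fp` by evaluation at the base point -/
noncomputable def CylData.ψ (cd : ms.CylData A)
    (hfibAll : ∀ Z : C, ms.Fib (terminal.from Z)) :
    cd.Hco ⟶ cd.Fp hfibAll where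
  app Z := TypeCat.ofHom fun g => (cd.Fp hfibAll).map g (cd.x0 hfibAll)
  naturality Z Z' h := by
    ext g
    exact FunctorToTypes.map_comp_apply (cd.Fp hfibAll) g h (cd.x0 hfibAll)

/-- the nat trans `F ⟶ Q ⋙ Hco` -/
noncomputable def CylData.β (cd : ms.CylData A) :
    cd.F ⟶ ms.W.Q ⋙ cd.Hco where
  app Y := TypeCat.ofHom fun x => Quot.lift (fun u : A ⟶ Y => ms.W.Q.map u)
    (fun u v h => cd.q_map_eq h) x.down
  naturality Y Z f := by
    ext x
    obtain ⟨x⟩ := x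
    induction x using Quot.ind with
    | _ u => exact ms.W.Q.map_comp u f

theorem CylData.q_map_surjective (cd : ms.CylData A)
    (hfibAll : ∀ Z : C, ms.Fib (terminal.from Z)) (X : C)
    (g : ms.W.Q.obj A ⟶ ms.W.Q.obj X) : ∃ u : A ⟶ X, ms.W.Q.map u = g := by
  letI : Localization.Lifting ms.W.Q ms.W (ms.W.Q ⋙ cd.Hco) cd.Hco := ⟨Iso.refl _⟩
  set γ : ms.W.Q ⋙ cd.Hco ⟶ ms.W.Q ⋙ cd.Hco :=
    Functor.whiskerLeft ms.W.Q (cd.ψ hfibAll) ≫ (cd.ρ hfibAll).hom ≫ cd.β with hγ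
  set δ := Localization.liftNatTrans ms.W.Q ms.W (ms.W.Q ⋙ cd.Hco)
    (ms.W.Q ⋙ cd.Hco) cd.Hco cd.Hco γ with hδ
  have happ : ∀ Y : C, δ.app (ms.W.Q.obj Y) = γ.app Y := by
    intro Y
    rw [hδ, Localization.liftNatTrans_app]
    have he : Localization.Lifting.iso ms.W.Q ms.W (ms.W.Q ⋙ cd.Hco) cd.Hco
        = Iso.refl (ms.W.Q ⋙ cd.Hco) := rfl
    rw [he]
    simp
  have c1 : δ.app (ms.W.Q.obj A) (𝟙 (ms.W.Q.obj A)) = 𝟙 (ms.W.Q.obj A) := by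
    rw [happ A]
    show cd.β.app A ((cd.ρ hfibAll).hom.app A
      ((cd.ψ hfibAll).app (ms.W.Q.obj A) (𝟙 _))) = _
    have e1 : (cd.ψ hfibAll).app (ms.W.Q.obj A) (𝟙 _) = cd.x0 hfibAll := by
      show (cd.Fp hfibAll).map (𝟙 _) (cd.x0 hfibAll) = cd.x0 hfibAll
      rw [(cd.Fp hfibAll).map_id]
      rfl
    rw [e1]
    have e2 : (cd.ρ hfibAll).hom.app A (cd.x0 hfibAll) = ⟨Quot.mk _ (𝟙 A)⟩ :=
      ConcreteCategory.congr_hom ((cd.ρ hfibAll).inv_hom_id_app A) _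
    rw [e2]
    show ms.W.Q.map (𝟙 A) = _
    rw [ms.W.Q.map_id]
  have hg : δ.app (ms.W.Q.obj X) g = g := by
    have nat : δ.app (ms.W.Q.obj X) (𝟙 _ ≫ g)
        = δ.app (ms.W.Q.obj A) (𝟙 _) ≫ g :=
      ConcreteCategory.congr_hom (δ.naturality g) (𝟙 (ms.W.Q.obj A))
    rw [c1] at nat
    simp only [Category.id_comp] at nat
    exact nat
  have hfinal : γ.app X g = g := by rw [← happ X]; exact hg
  have hexp : cd.β.app X ((cd.ρ hfibAll).hom.app X
      ((cd.Fp hfibAll).map g (cd.x0 hfibAll))) = g := hfinal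
  set z := (cd.ρ hfibAll).hom.app X ((cd.Fp hfibAll).map g (cd.x0 hfibAll)) with hz
  obtain ⟨uq, huq⟩ := Quot.exists_rep z.down
  refine ⟨uq, ?_⟩
  have hb : cd.β.app X z = Quot.lift (fun u : A ⟶ X => ms.W.Q.map u)
      (fun u v h => cd.q_map_eq h) z.down := rfl
  rw [← hexp, hb, ← huq]

/-- The homotopy classes of maps `A ⟶ X` are in bijection with the morphisms
`A ⟶ X` in the localized category. -/
noncomputable def CylData.quotEquiv (cd : ms.CylData A)
    (hfibAll : ∀ Z : C, ms.Fib (terminal.from Z)) (X : C) :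
    Quot (fun u v : A ⟶ X => cd.Rel u v) ≃ (ms.W.Q.obj A ⟶ ms.W.Q.obj X) := by
  apply Equiv.ofBijective (Quot.lift (fun u : A ⟶ X => ms.W.Q.map u)
    (fun u v h => cd.q_map_eq h))
  constructor
  · intro x y hxy
    induction x using Quot.ind with
    | _ u =>
    induction y using Quot.ind with
    | _ v =>
    exact Quot.sound ((cd.rel_iff_q_eq hfibAll u v).2 hxy)
  · intro g
    obtain ⟨u, hu⟩ := cd.q_map_surjective hfibAll X g
    exact ⟨Quot.mk _ u, hu⟩

end ModelStr

end MS17Loc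

section MS17Under

open CategoryTheory Limits

set_option linter.unusedSectionVars false

universe v' u'

namespace ModelStr

variable {M : Type u'} [Category.{v'} M]

lemma under_hlp (ms : ModelStr M) (S : M) {A B X Y : Under S} (i : A ⟶ B) (p : X ⟶ Y)
    (h : HasLiftingProperty i.right p.right) : HasLiftingProperty i p := by
  constructor
  intro f g sq
  have sq' : CommSq f.right i.right p.right g.right :=
    ⟨by rw [← Under.comp_right, ← Under.comp_right, sq.w]⟩
  haveI := h
  refine ⟨⟨⟨Under.homMk sq'.lift ?_, ?_, ?_⟩⟩⟩
  · rw [← Under.w i, Category.assoc, sq'.fac_left, Under.w f]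
  · ext
    simpa using sq'.fac_left
  · ext
    simpa using sq'.fac_right

/-- the under model structure, with weak equivalences `underW` -/
def underMS (ms : ModelStr M) (S : M) : ModelStr (Under S) where
  W := underW ms S
  Cof := fun _ _ f => ms.Cof f.right
  Fib := fun _ _ f => ms.Fib f.right
  w_comp f g hf hg := ms.w_comp f.right g.right hf hg
  w_cancel_left f g h hg := ms.w_cancel_left f.right g.right h hg
  w_cancel_right f g h hf := ms.w_cancel_right f.right g.right h hf
  retract_stable f g iA rA iB rB h1 h2 h3 h4 :=
    ms.retract_stable f.right g.right iA.right rA.right iB.right rB.right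
      (by rw [← Under.comp_right, h1]; rfl) (by rw [← Under.comp_right, h2]; rfl)
      (by rw [← Under.comp_right, ← Under.comp_right, h3])
      (by rw [← Under.comp_right, ← Under.comp_right, h4])
  lift_cof_tfib i p hc hf hw :=
    under_hlp ms S i p (ms.lift_cof_tfib i.right p.right hc hf hw)
  lift_tcof_fib i p hc hwi hf :=
    under_hlp ms S i p (ms.lift_tcof_fib i.right p.right hc hwi hf)
  fact_cof_tfib {X Y} f := by
    obtain ⟨Z, i, p, hc, hf, hw, hip⟩ := ms.fact_cof_tfib f.right
    refine ⟨Under.mk (X.hom ≫ i), Under.homMk i rfl,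
      Under.homMk p (by change (X.hom ≫ i) ≫ p = _; rw [Category.assoc, hip, Under.w]), hc, hf, hw, ?_⟩
    ext
    simpa using hip
  fact_tcof_fib {X Y} f := by
    obtain ⟨Z, i, p, hc, hwi, hf, hip⟩ := ms.fact_tcof_fib f.right
    refine ⟨Under.mk (X.hom ≫ i), Under.homMk i rfl,
      Under.homMk p (by change (X.hom ≫ i) ≫ p = _; rw [Category.assoc, hip, Under.w]), hc, hwi, hf, ?_⟩
    ext
    simpa using hip

/-- the terminal object of the under category -/
noncomputable def underTerminal (S : M) [HasTerminal M] :
    IsTerminal (Under.mk (terminal.from S)) :=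
  IsTerminal.ofUniqueHom
    (fun Z => Under.homMk (terminal.from Z.right) (terminal.hom_ext _ _))
    (fun Z m => by
      ext
      exact terminal.hom_ext _ _)

lemma under_allFibrant (ms : ModelStr M) (S : M) [HasTerminal M] [HasTerminal (Under S)]
    (hfib : ∀ Z : M, ms.Fibrant Z) (Z : Under S) :
    (underMS ms S).Fib (terminal.from Z) := by
  have e : (⊤_ (Under S)) ≅ Under.mk (terminal.from S) :=
    terminalIsTerminal.uniqueUpToIso (underTerminal S)
  haveI : IsIso ((Under.forget S).map e.hom) := inferInstance
  exact (ms.mem_of_arrow_iso (Iso.refl Z.right) ((Under.forget S).mapIso e)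
    (terminal.hom_ext _ _)).2.2 (hfib Z.right)

end ModelStr

end MS17Under

section MS17Main

open CategoryTheory Limits

set_option linter.unusedSectionVars false
set_option maxHeartbeats 1000000

variable {M : Type u} [Category.{v} M] [HasFiniteLimits M] [HasFiniteColimits M]
  [HasPushouts M]

lemma ms17_w_sigma (ms : ModelStr M) (Φ : Coglob M)
    (hwc : WeaklyContractibleCoglob ms Φ) (n : ℕ) : ms.W (Φ.σ n) := by
  have h : Φ.σ n ≫ terminal.from (Φ.D (n+1)) = terminal.from (Φ.D n) :=
    terminal.hom_ext _ _
  exact ms.w_cancel_left _ _ (by rw [h]; exact hwc n) (hwc (n+1))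

lemma ms17_w_tau (ms : ModelStr M) (Φ : Coglob M)
    (hwc : WeaklyContractibleCoglob ms Φ) (n : ℕ) : ms.W (Φ.τ n) := by
  have h : Φ.τ n ≫ terminal.from (Φ.D (n+1)) = terminal.from (Φ.D n) :=
    terminal.hom_ext _ _
  exact ms.w_cancel_left _ _ (by rw [h]; exact hwc n) (hwc (n+1))

lemma ms17_sphere_succ (Φ : Coglob M) (n : ℕ) :
    (sphereP Φ (n+1)).2.1
      = pushout.desc (Φ.τ n) (Φ.σ n) (sphereP Φ n).2.2.symm := rfl

lemma ms17_sigma_eq (Φ : Coglob M) (n : ℕ) :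
    Φ.σ n = pushout.inr (sphereP Φ n).2.1 (sphereP Φ n).2.1 ≫ (sphereP Φ (n+1)).2.1 := by
  rw [ms17_sphere_succ, pushout.inr_desc]

lemma ms17_tau_eq (Φ : Coglob M) (n : ℕ) :
    Φ.τ n = pushout.inl (sphereP Φ n).2.1 (sphereP Φ n).2.1 ≫ (sphereP Φ (n+1)).2.1 := by
  rw [ms17_sphere_succ, pushout.inl_desc]

lemma ms17_cof_sigma (ms : ModelStr M) (Φ : Coglob M)
    (hcof : CofibrantCoglob ms Φ) (n : ℕ) : ms.Cof (Φ.σ n) := by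
  rw [ms17_sigma_eq]
  exact ms.cof_comp (ms.cof_pushout_inr _ _ (hcof n)) (hcof (n+1))

lemma ms17_cof_tau (ms : ModelStr M) (Φ : Coglob M)
    (hcof : CofibrantCoglob ms Φ) (n : ℕ) : ms.Cof (Φ.τ n) := by
  rw [ms17_tau_eq]
  exact ms.cof_comp (ms.cof_pushout_inl _ _ (hcof n)) (hcof (n+1))

lemma ms17_exists_kappa (ms : ModelStr M) (Φ : Coglob M)
    (hfib : ∀ Z : M, ms.Fibrant Z) (hcof : CofibrantCoglob ms Φ)
    (hwc : WeaklyContractibleCoglob ms Φ) (n : ℕ) :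
    ∃ κ : Φ.D (n+1) ⟶ Φ.D n, Φ.σ n ≫ κ = 𝟙 _ ∧ Φ.τ n ≫ κ = 𝟙 _ := by
  haveI := ms.lift_cof_tfib (sphereP Φ (n+1)).2.1 (terminal.from (Φ.D n))
    (hcof (n+1)) (hfib _) (hwc n)
  have sq : CommSq (W := (sphereP Φ (n+1)).1) (pushout.desc (𝟙 (Φ.D n)) (𝟙 (Φ.D n)) rfl)
      ((sphereP Φ (n+1)).2.1) (terminal.from (Φ.D n)) (terminal.from (Φ.D (n+1))) :=
    ⟨terminal.hom_ext _ _⟩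
  haveI := this.sq_hasLift sq
  have h := sq.fac_left
  refine ⟨sq.lift, ?_, ?_⟩
  · have h2 : pushout.inr (sphereP Φ n).2.1 (sphereP Φ n).2.1
        ≫ (sphereP Φ (n+1)).2.1 ≫ sq.lift
        = pushout.inr (sphereP Φ n).2.1 (sphereP Φ n).2.1
          ≫ pushout.desc (𝟙 (Φ.D n)) (𝟙 (Φ.D n)) rfl := by
        exact congrArg (pushout.inr (sphereP Φ n).2.1 (sphereP Φ n).2.1 ≫ ·) h
    rw [pushout.inr_desc] at h2
    calc Φ.σ n ≫ sq.lift
        = (pushout.inr (sphereP Φ n).2.1 (sphereP Φ n).2.1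
            ≫ (sphereP Φ (n+1)).2.1) ≫ sq.lift := by rw [← ms17_sigma_eq]
      _ = 𝟙 (Φ.D n) := by exact (Category.assoc _ _ _).trans h2
  · have h2 : pushout.inl (sphereP Φ n).2.1 (sphereP Φ n).2.1
        ≫ (sphereP Φ (n+1)).2.1 ≫ sq.lift
        = pushout.inl (sphereP Φ n).2.1 (sphereP Φ n).2.1
          ≫ pushout.desc (𝟙 (Φ.D n)) (𝟙 (Φ.D n)) rfl := by
        exact congrArg (pushout.inl (sphereP Φ n).2.1 (sphereP Φ n).2.1 ≫ ·) h
    rw [pushout.inl_desc] at h2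
    calc Φ.τ n ≫ sq.lift
        = (pushout.inl (sphereP Φ n).2.1 (sphereP Φ n).2.1
            ≫ (sphereP Φ (n+1)).2.1) ≫ sq.lift := by rw [← ms17_tau_eq]
      _ = 𝟙 (Φ.D n) := by exact (Category.assoc _ _ _).trans h2

/-- cylinder data for dimension 0 -/
noncomputable def ms17_cylZero (ms : ModelStr M) (Φ : Coglob M)
    (hfib : ∀ Z : M, ms.Fibrant Z) (hcof : CofibrantCoglob ms Φ)
    (hwc : WeaklyContractibleCoglob ms Φ) : ms.CylData (Φ.D 0) where
  Cyl := Φ.D 1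
  d0 := Φ.σ 0
  d1 := Φ.τ 0
  r := (ms17_exists_kappa ms Φ hfib hcof hwc 0).choose
  hr0 := (ms17_exists_kappa ms Φ hfib hcof hwc 0).choose_spec.1
  hr1 := (ms17_exists_kappa ms Φ hfib hcof hwc 0).choose_spec.2
  hW0 := ms17_w_sigma ms Φ hwc 0
  hW1 := ms17_w_tau ms Φ hwc 0
  hC0 := ms17_cof_sigma ms Φ hcof 0
  hC1 := ms17_cof_tau ms Φ hcof 0
  AA := (sphereP Φ 1).1
  in0 := pushout.inr _ _
  in1 := pushout.inl _ _
  desc := fun {Z} f g => pushout.desc g f (initial.hom_ext _ _)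
  desc_in0 := fun f g => pushout.inr_desc _ _ _
  desc_in1 := fun f g => pushout.inl_desc _ _ _
  desc_comp := fun f g h => by
    apply pushout.hom_ext
    · exact (pushout.inl_desc_assoc _ _ _ _).trans (pushout.inl_desc _ _ _).symm
    · exact (pushout.inr_desc_assoc _ _ _ _).trans (pushout.inr_desc _ _ _).symm
  hCq := hcof 1
  hCofA := fun {Y Z} p hfp hwp v => by
    haveI := ms.lift_cof_tfib (sphereP Φ 0).2.1 p (hcof 0) hfp hwp
    have sq : CommSq (W := (sphereP Φ 0).1) (initial.to Y) (sphereP Φ 0).2.1 p v := ⟨initial.hom_ext _ _⟩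
    haveI := this.sq_hasLift sq
    exact ⟨sq.lift, sq.fac_right⟩

/-- cylinder data for the under category in dimension `m+1` -/
noncomputable def ms17_cylUnder (ms : ModelStr M) (Φ : Coglob M)
    (hfib : ∀ Z : M, ms.Fibrant Z) (hcof : CofibrantCoglob ms Φ)
    (hwc : WeaklyContractibleCoglob ms Φ) (m : ℕ) :
    (ModelStr.underMS ms (sphereP Φ (m+1)).1).CylData
      (Under.mk (sphereP Φ (m+1)).2.1) where
  Cyl := Under.mk ((sphereP Φ (m+1)).2.1 ≫ Φ.σ (m+1))
  d0 := Under.homMk (Φ.σ (m+1)) rfl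
  d1 := Under.homMk (Φ.τ (m+1)) (by exact (sphereP Φ (m+1)).2.2.symm)
  r := Under.homMk (ms17_exists_kappa ms Φ hfib hcof hwc (m+1)).choose (by
    simp only [Under.mk_hom]
    rw [Category.assoc,
      (ms17_exists_kappa ms Φ hfib hcof hwc (m+1)).choose_spec.1, Category.comp_id])
  hr0 := by
    ext
    simpa using (ms17_exists_kappa ms Φ hfib hcof hwc (m+1)).choose_spec.1
  hr1 := by
    ext
    simpa using (ms17_exists_kappa ms Φ hfib hcof hwc (m+1)).choose_spec.2
  hW0 := ms17_w_sigma ms Φ hwc (m+1)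
  hW1 := ms17_w_tau ms Φ hwc (m+1)
  hC0 := ms17_cof_sigma ms Φ hcof (m+1)
  hC1 := ms17_cof_tau ms Φ hcof (m+1)
  AA := Under.mk ((sphereP Φ (m+1)).2.1
    ≫ pushout.inr (sphereP Φ (m+1)).2.1 (sphereP Φ (m+1)).2.1)
  in0 := Under.homMk (pushout.inr _ _) rfl
  in1 := Under.homMk (pushout.inl _ _) (by exact pushout.condition)
  desc := fun {Z} f g => Under.homMk
    (pushout.desc g.right f.right ((Under.w g).trans (Under.w f).symm))
    (by simp only [Under.mk_hom]; rw [Category.assoc, pushout.inr_desc]; exact Under.w f)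
  desc_in0 := fun f g => by ext; simp [pushout.inr_desc]
  desc_in1 := fun f g => by ext; simp [pushout.inl_desc]
  desc_comp := fun f g h => by
    ext
    apply pushout.hom_ext <;> simp [pushout.inl_desc, pushout.inr_desc, pushout.inl_desc_assoc, pushout.inr_desc_assoc]
  hCq := hcof (m+2)
  hCofA := fun {Y Z} p hfp hwp v => by
    haveI := ms.lift_cof_tfib (sphereP Φ (m+1)).2.1 p.right (hcof (m+1)) hfp hwp
    have sq : CommSq Y.hom (sphereP Φ (m+1)).2.1 p.right v.right :=
      ⟨(Under.w p).trans (Under.w v).symm⟩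
    refine ⟨Under.homMk sq.lift sq.fac_left, ?_⟩
    ext
    simpa using sq.fac_right

end MS17Main

theorem fundamental_groupoid_homotopies_via_model_structure {M : Type u}
    [Category.{v} M] [HasFiniteLimits M] [HasFiniteColimits M] [HasPushouts M]
    (ms : ModelStr M) (hfib : ∀ Z : M, ms.Fibrant Z) (Φ : Coglob M)
    (hcof : CofibrantCoglob ms Φ) (hwc : WeaklyContractibleCoglob ms Φ)
    (X : M) :
    -- (i): two objects of `Π_∞(X)` are homotopic iff they are equal in `Ho(ℳ)`,
    (∀ x y : Φ.D 0 ⟶ X,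
      (∃ h : Φ.D 1 ⟶ X, Φ.σ 0 ≫ h = x ∧ Φ.τ 0 ≫ h = y) ↔
        ms.W.Q.map x = ms.W.Q.map y) ∧
    -- whence a bijection `π₀(Π_∞(X)) ≅ π₀(X) = [*, X]`
    Nonempty
      (Quot (fun x y : Φ.D 0 ⟶ X =>
          ∃ h : Φ.D 1 ⟶ X, Φ.σ 0 ≫ h = x ∧ Φ.τ 0 ≫ h = y) ≃
        (ms.W.Q.obj (⊤_ M) ⟶ ms.W.Q.obj X)) ∧
    -- (ii): for parallel `(n-1)`-arrows `x, y` and `n`-arrows `u, v : x → y`,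
    -- `u ∼ v` in `Π_∞(X)` iff `u = v` in `Ho(S_{n-1}\ℳ)`,
    (∀ (m : ℕ) (x y : Φ.D m ⟶ X)
      (hpar : (sphereP Φ m).2.1 ≫ y = (sphereP Φ m).2.1 ≫ x)
      (u v : Φ.D (m + 1) ⟶ X)
      (hu : (sphereP Φ (m + 1)).2.1 ≫ u = parPair Φ x y hpar)
      (hv : (sphereP Φ (m + 1)).2.1 ≫ v = parPair Φ x y hpar),
      (∃ h : Φ.D (m + 2) ⟶ X, Φ.σ (m + 1) ≫ h = u ∧ Φ.τ (m + 1) ≫ h = v) ↔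
        (underW ms (sphereP Φ (m + 1)).1).Q.map
            (Under.homMk (U := Under.mk (sphereP Φ (m + 1)).2.1)
              (V := Under.mk (parPair Φ x y hpar)) u hu) =
          (underW ms (sphereP Φ (m + 1)).1).Q.map
            (Under.homMk (U := Under.mk (sphereP Φ (m + 1)).2.1)
              (V := Under.mk (parPair Φ x y hpar)) v hv)) ∧
    -- whence a bijection `π_n(Π_∞(X), x, y) ≅ [(D_n, i_n), (X, (y, x))]`
    (∀ (m : ℕ) (x y : Φ.D m ⟶ X)
      (hpar : (sphereP Φ m).2.1 ≫ y = (sphereP Φ m).2.1 ≫ x),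
      Nonempty
        (Quot (fun u v : {w : Φ.D (m + 1) ⟶ X //
              (sphereP Φ (m + 1)).2.1 ≫ w = parPair Φ x y hpar} =>
            ∃ h : Φ.D (m + 2) ⟶ X, Φ.σ (m + 1) ≫ h = u.1 ∧ Φ.τ (m + 1) ≫ h = v.1) ≃
          ((underW ms (sphereP Φ (m + 1)).1).Q.obj
              (Under.mk (sphereP Φ (m + 1)).2.1) ⟶
            (underW ms (sphereP Φ (m + 1)).1).Q.obj
              (Under.mk (parPair Φ x y hpar))))) := by
  refine ⟨?_, ?_, ?_, ?_⟩
  · intro x y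
    exact (ms17_cylZero ms Φ hfib hcof hwc).rel_iff_q_eq hfib x y
  · haveI : IsIso (ms.W.Q.map (terminal.from (Φ.D 0))) := ms.W.Q_inverts _ (hwc 0)
    exact ⟨((ms17_cylZero ms Φ hfib hcof hwc).quotEquiv hfib X).trans
      ((asIso (ms.W.Q.map (terminal.from (Φ.D 0)))).homCongr (Iso.refl _))⟩
  · intro m x y hpar u v hu hv
    haveI : HasTerminal (Under (sphereP Φ (m+1)).1) :=
      inferInstanceAs (HasTerminal (StructuredArrow (sphereP Φ (m+1)).1 (𝟭 M)))
    haveI : HasBinaryProducts (Under (sphereP Φ (m+1)).1) :=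
      inferInstanceAs (HasBinaryProducts (StructuredArrow (sphereP Φ (m+1)).1 (𝟭 M)))
    haveI : HasPullbacks (Under (sphereP Φ (m+1)).1) :=
      inferInstanceAs (HasPullbacks (StructuredArrow (sphereP Φ (m+1)).1 (𝟭 M)))
    have hfibU : ∀ Z : Under (sphereP Φ (m+1)).1,
        (ModelStr.underMS ms (sphereP Φ (m+1)).1).Fib (terminal.from Z) :=
      fun Z => ModelStr.under_allFibrant ms (sphereP Φ (m+1)).1 hfib Z
    have relIff : (ms17_cylUnder ms Φ hfib hcof hwc m).Rel
        (Under.homMk (U := Under.mk (sphereP Φ (m + 1)).2.1)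
          (V := Under.mk (parPair Φ x y hpar)) u hu)
        (Under.homMk (U := Under.mk (sphereP Φ (m + 1)).2.1)
          (V := Under.mk (parPair Φ x y hpar)) v hv)
        ↔ (∃ h : Φ.D (m + 2) ⟶ X, Φ.σ (m + 1) ≫ h = u ∧ Φ.τ (m + 1) ≫ h = v) := by
      constructor
      · rintro ⟨H, H0, H1⟩
        exact ⟨H.right, congrArg CommaMorphism.right H0,
          congrArg CommaMorphism.right H1⟩
      · rintro ⟨h, h0, h1⟩
        refine ⟨Under.homMk h (by
          show ((sphereP Φ (m + 1)).2.1 ≫ Φ.σ (m + 1)) ≫ h = parPair Φ x y hpar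
          rw [Category.assoc, h0]; exact hu), ?_, ?_⟩
        · ext
          exact h0
        · ext
          exact h1
    exact relIff.symm.trans
      ((ms17_cylUnder ms Φ hfib hcof hwc m).rel_iff_q_eq hfibU _ _)
  · intro m x y hpar
    haveI : HasTerminal (Under (sphereP Φ (m+1)).1) :=
      inferInstanceAs (HasTerminal (StructuredArrow (sphereP Φ (m+1)).1 (𝟭 M)))
    haveI : HasBinaryProducts (Under (sphereP Φ (m+1)).1) :=
      inferInstanceAs (HasBinaryProducts (StructuredArrow (sphereP Φ (m+1)).1 (𝟭 M)))
    haveI : HasPullbacks (Under (sphereP Φ (m+1)).1) :=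
      inferInstanceAs (HasPullbacks (StructuredArrow (sphereP Φ (m+1)).1 (𝟭 M)))
    have hfibU : ∀ Z : Under (sphereP Φ (m+1)).1,
        (ModelStr.underMS ms (sphereP Φ (m+1)).1).Fib (terminal.from Z) :=
      fun Z => ModelStr.under_allFibrant ms (sphereP Φ (m+1)).1 hfib Z
    refine ⟨(Quot.congr
      (⟨fun w => Under.homMk w.1 w.2, fun f => ⟨f.right, Under.w f⟩,
        fun w => rfl, fun f => by ext; rfl⟩ :
        {w : Φ.D (m + 1) ⟶ X // (sphereP Φ (m + 1)).2.1 ≫ w = parPair Φ x y hpar}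
          ≃ (Under.mk (sphereP Φ (m + 1)).2.1 ⟶ Under.mk (parPair Φ x y hpar)))
      ?_).trans
      ((ms17_cylUnder ms Φ hfib hcof hwc m).quotEquiv hfibU
        (Under.mk (parPair Φ x y hpar)))⟩
    intro a b
    constructor
    · rintro ⟨h, h0, h1⟩
      exact ⟨Under.homMk h (by
          show ((sphereP Φ (m + 1)).2.1 ≫ Φ.σ (m + 1)) ≫ h = parPair Φ x y hpar
          rw [Category.assoc, h0]; exact a.2),
        by ext; exact h0, by ext; exact h1⟩
    · rintro ⟨H, H0, H1⟩
      exact ⟨H.right, congrArg CommaMorphism.right H0,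
        congrArg CommaMorphism.right H1⟩
end
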